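/- An automorphism f of Λ_m that fixes every primitive idempotent e_i, and sends β_i ↦ b_iβ_i (4 ≤ i ≤ m), α_i ↦ a_iα_i, δ_i ↦ c_iδ_i (i = 1,2) with a_1c_1 = a_2c_2, is inner if and only if a_1c_1b_mb_{m-1}⋯b_4 = 1. -/

import Mathlib

/-- Generators of the algebra `Λ_m`: the vertex idempotents `e_i` (`i = 1,…,m`,
here `0`-indexed), the arrows `α₁ : 3 → 1`, `α₂ : 3 → 2`, `δ₁ : 1 → m`,
`δ₂ : 2 → m` and the arrows `β_i : i → i-1` for `4 ≤ i ≤ m` (here the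
generators `β j` with `j.val < 3` are junk and are killed by a relation). -/
inductive LamGen (m : ℕ) where
  | e : Fin m → LamGen m
  | α : Fin 2 → LamGen m
  | δ : Fin 2 → LamGen m
  | β : Fin m → LamGen m

namespace LamGen

/-- The generator is an arrow (not a vertex idempotent). -/
def IsArrow {m : ℕ} : LamGen m → Prop
  | e _ => False
  | _ => True

variable (k : Type*) [Field k] (m : ℕ) (hm : 4 ≤ m)

open FreeAlgebra

/-- The defining relations of `Λ_m`, as a relation on the free algebra on the
generators: the path-algebra relations for the quiver `Q_m` (orthogonal idempotents
summing to `1`, source/target relations for the arrows), the commutativity relation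
`α₁δ₁ = α₂δ₂` and the vanishing of all paths of length `m`.  Multiplication is
written in path order (`αβ` means “first `α`, then `β`”). -/
inductive Rel : FreeAlgebra k (LamGen m) → FreeAlgebra k (LamGen m) → Prop
  | idem (i j : Fin m) :
      Rel (ι k (e i) * ι k (e j)) (if i = j then ι k (e i) else 0)
  | sum_one : Rel (∑ i : Fin m, ι k (e i)) 1
  | alpha_src (i : Fin 2) :
      Rel (ι k (e ⟨2, by omega⟩) * ι k (α i)) (ι k (α i))
  | alpha_tgt (i : Fin 2) :
      Rel (ι k (α i) * ι k (e ⟨i.val, by omega⟩)) (ι k (α i))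
  | delta_src (i : Fin 2) :
      Rel (ι k (e ⟨i.val, by omega⟩) * ι k (δ i)) (ι k (δ i))
  | delta_tgt (i : Fin 2) :
      Rel (ι k (δ i) * ι k (e ⟨m - 1, by omega⟩)) (ι k (δ i))
  | beta_junk (j : Fin m) (h : j.val < 3) : Rel (ι k (β j)) 0
  | beta_src (j : Fin m) (h : 3 ≤ j.val) :
      Rel (ι k (e j) * ι k (β j)) (ι k (β j))
  | beta_tgt (j : Fin m) (h : 3 ≤ j.val) :
      Rel (ι k (β j) * ι k (e ⟨j.val - 1, by omega⟩)) (ι k (β j))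
  | comm : Rel (ι k (α 0) * ι k (δ 0)) (ι k (α 1) * ι k (δ 1))
  | long (w : Fin m → LamGen m) (hw : ∀ n, IsArrow (w n)) :
      Rel ((List.ofFn fun n : Fin m => ι k (w n)).prod) 0

end LamGen

/-- The symmetric representation-finite algebra `Λ_m` of type `D_m`
(the Double Edge algebra of the star with `m-2` regular edges and a double edge). -/
abbrev Lam (k : Type*) [Field k] (m : ℕ) (hm : 4 ≤ m) :=
  RingQuot (LamGen.Rel k m hm)

namespace LamGen

variable (k : Type*) [Field k] (m : ℕ) (hm : 4 ≤ m)

/-- The canonical projection onto `Λ_m`. -/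
noncomputable def π : FreeAlgebra k (LamGen m) →ₐ[k] Lam k m hm :=
  RingQuot.mkAlgHom k (Rel k m hm)

/-- The vertex idempotents `e_i ∈ Λ_m`. -/
noncomputable def eL (i : Fin m) : Lam k m hm := π k m hm (FreeAlgebra.ι k (e i))

/-- The arrows `α_i ∈ Λ_m`. -/
noncomputable def αL (i : Fin 2) : Lam k m hm := π k m hm (FreeAlgebra.ι k (α i))

/-- The arrows `δ_i ∈ Λ_m`. -/
noncomputable def δL (i : Fin 2) : Lam k m hm := π k m hm (FreeAlgebra.ι k (δ i))

/-- The arrows `β_j ∈ Λ_m`. -/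
noncomputable def βL (j : Fin m) : Lam k m hm := π k m hm (FreeAlgebra.ι k (β j))

end LamGen

open LamGen


namespace Stmt5Aux

open LamGen Matrix

set_option maxHeartbeats 1000000
set_option synthInstance.maxHeartbeats 400000

/-! ### The truncated polynomial ring `k[t]/(t^m)` -/

variable (k : Type*) [Field k] (m : ℕ)

/-- The truncated polynomial ring `k[t]/(t^m)`. -/
abbrev TruncPoly := Polynomial k ⧸ Ideal.span {(Polynomial.X : Polynomial k) ^ m}

noncomputable def tp : TruncPoly k m := Ideal.Quotient.mk _ Polynomial.X

lemma tp_pow_m : (tp k m) ^ m = 0 := by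
  rw [tp, ← map_pow, Ideal.Quotient.eq_zero_iff_mem]
  exact Ideal.subset_span rfl

/-- Evaluation at `0`. -/
noncomputable def tpEval (hm : 2 ≤ m) : TruncPoly k m →ₐ[k] k :=
  Ideal.Quotient.liftₐ _ (Polynomial.aeval 0) (by
    intro p hp
    rw [Ideal.mem_span_singleton] at hp
    obtain ⟨q, rfl⟩ := hp
    simp [Polynomial.aeval_mul, zero_pow (by omega : m ≠ 0)])

lemma tpEval_eq_zero_of_tp_mul (hm : 2 ≤ m) (r : TruncPoly k m) (h : tp k m * r = 0) :
    tpEval k m hm r = 0 := by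
  obtain ⟨p, rfl⟩ := Ideal.Quotient.mk_surjective r
  rw [tp, ← _root_.map_mul, Ideal.Quotient.eq_zero_iff_mem, Ideal.mem_span_singleton] at h
  obtain ⟨q, hq⟩ := h
  have hm1 : m - 1 + 1 = m := by omega
  have hXq : Polynomial.X * p = Polynomial.X * (Polynomial.X ^ (m-1) * q) := by
    rw [hq, ← mul_assoc, ← pow_succ', hm1]
  have hp : p = Polynomial.X ^ (m-1) * q := mul_left_cancel₀ Polynomial.X_ne_zero hXq
  rw [hp]
  show Polynomial.aeval (0 : k) (Polynomial.X ^ (m-1) * q) = 0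
  simp [zero_pow (by omega : m - 1 ≠ 0)]

/-! ### A matrix representation of `Λ_m` over a generic commutative ring -/

variable (R : Type*) [CommRing R] [Algebra k R] (t : R)

/-- matrix of each arrow, without the `t` factor -/
noncomputable def arrowMat (hm : 4 ≤ m) : LamGen m → Matrix (Fin m) (Fin m) R
  | .e _ => 0
  | .α i => single ⟨2, by omega⟩ ⟨i.val, by omega⟩ 1
  | .δ i => single ⟨i.val, by omega⟩ ⟨m - 1, by omega⟩ 1
  | .β j => if 3 ≤ j.val then single j ⟨j.val - 1, by omega⟩ 1 else 0

/-- matrix of each generator -/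
noncomputable def genMat (hm : 4 ≤ m) : LamGen m → Matrix (Fin m) (Fin m) R
  | .e i => single i i 1
  | g => t • arrowMat m R hm g

lemma genMat_arrow (hm : 4 ≤ m) (g : LamGen m) (hg : g.IsArrow) :
    genMat m R t hm g = t • arrowMat m R hm g := by
  cases g with
  | e i => exact hg.elim
  | α i => rfl
  | δ i => rfl
  | β j => rfl

lemma sum_std_one : ∑ i : Fin m, single i i (1 : R) = 1 := by
  ext p q
  by_cases h : p = q
  · subst h
    simp [Matrix.sum_apply, Matrix.single, Matrix.one_apply]
  · simp only [Matrix.sum_apply, Matrix.single, Matrix.one_apply, Matrix.of_apply]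
    rw [if_neg h, Finset.sum_eq_zero]
    intro i _
    rw [if_neg]
    rintro ⟨rfl, rfl⟩
    exact h rfl

lemma list_map_smul_prod (r : R) (l : List (Matrix (Fin m) (Fin m) R)) :
    (l.map (fun A => r • A)).prod = r ^ l.length • l.prod := by
  induction l with
  | nil => simp
  | cons a l ih =>
      simp only [List.map_cons, List.prod_cons, ih, List.length_cons]
      rw [Matrix.smul_mul, Matrix.mul_smul, smul_smul, ← pow_succ']

noncomputable def rho0 (hm : 4 ≤ m) :
    FreeAlgebra k (LamGen m) →ₐ[k] Matrix (Fin m) (Fin m) R :=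
  FreeAlgebra.lift k (genMat m R t hm)

lemma rho0_ι (hm : 4 ≤ m) (g : LamGen m) :
    rho0 k m R t hm (FreeAlgebra.ι k g) = genMat m R t hm g := by
  rw [rho0, FreeAlgebra.lift_ι_apply]

lemma genMat_e (hm : 4 ≤ m) (i : Fin m) :
    genMat m R t hm (e i) = single i i 1 := rfl

lemma genMat_α (hm : 4 ≤ m) (i : Fin 2) :
    genMat m R t hm (α i) =
      t • single ⟨2, by omega⟩ ⟨i.val, by omega⟩ 1 := rfl

lemma genMat_δ (hm : 4 ≤ m) (i : Fin 2) :
    genMat m R t hm (δ i) =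
      t • single ⟨i.val, by omega⟩ ⟨m - 1, by omega⟩ 1 := rfl

lemma genMat_β (hm : 4 ≤ m) (j : Fin m) :
    genMat m R t hm (β j) =
      t • (if 3 ≤ j.val then single j ⟨j.val - 1, by omega⟩ 1 else 0) := rfl

lemma rho0_rel (hm : 4 ≤ m) (ht : t ^ m = 0) :
    ∀ ⦃x y⦄, Rel k m hm x y → rho0 k m R t hm x = rho0 k m R t hm y := by
  intro x y h
  induction h with
  | idem i j =>
      rcases eq_or_ne i j with rfl | h
      · rw [if_pos rfl, _root_.map_mul, rho0_ι, genMat_e, single_mul_single_same,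
          one_mul]
      · rw [if_neg h, _root_.map_mul, rho0_ι, rho0_ι, genMat_e, genMat_e, map_zero,
          single_mul_single_of_ne (h := h)]
  | sum_one =>
      rw [map_sum, _root_.map_one]
      simp only [rho0_ι, genMat_e]
      exact sum_std_one m R
  | alpha_src i =>
      rw [_root_.map_mul, rho0_ι, rho0_ι, genMat_e, genMat_α, Matrix.mul_smul,
        single_mul_single_same, one_mul]
  | alpha_tgt i =>
      rw [_root_.map_mul, rho0_ι, rho0_ι, genMat_α, genMat_e, Matrix.smul_mul,
        single_mul_single_same, mul_one]
  | delta_src i =>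
      rw [_root_.map_mul, rho0_ι, rho0_ι, genMat_e, genMat_δ, Matrix.mul_smul,
        single_mul_single_same, one_mul]
  | delta_tgt i =>
      rw [_root_.map_mul, rho0_ι, rho0_ι, genMat_δ, genMat_e, Matrix.smul_mul,
        single_mul_single_same, mul_one]
  | beta_junk j h =>
      rw [rho0_ι, genMat_β, if_neg (by omega : ¬ 3 ≤ j.val), smul_zero, map_zero]
  | beta_src j h =>
      rw [_root_.map_mul, rho0_ι, rho0_ι, genMat_e, genMat_β, if_pos h, Matrix.mul_smul,
        single_mul_single_same, one_mul]
  | beta_tgt j h =>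
      rw [_root_.map_mul, rho0_ι, rho0_ι, genMat_β, genMat_e, if_pos h, Matrix.smul_mul,
        single_mul_single_same, mul_one]
  | comm =>
      rw [_root_.map_mul, _root_.map_mul, rho0_ι, rho0_ι, rho0_ι, rho0_ι, genMat_α, genMat_α,
        genMat_δ, genMat_δ, Matrix.smul_mul, Matrix.smul_mul, Matrix.mul_smul, Matrix.mul_smul,
        single_mul_single_same, single_mul_single_same, one_mul]
  | long w hw =>
      have h1 : (rho0 k m R t hm) ((List.ofFn fun n : Fin m => FreeAlgebra.ι k (w n)).prod)
          = (List.ofFn fun n : Fin m => genMat m R t hm (w n)).prod := by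
        rw [_root_.map_list_prod, List.map_ofFn]
        congr 1
        refine congrArg List.ofFn (funext fun n => ?_)
        show rho0 k m R t hm (FreeAlgebra.ι k (w n)) = _
        rw [rho0, FreeAlgebra.lift_ι_apply]
      have h2 : (List.ofFn fun n : Fin m => genMat m R t hm (w n))
          = (List.ofFn fun n : Fin m => arrowMat m R hm (w n)).map (fun A => t • A) := by
        rw [List.map_ofFn]
        congr 1
        funext n
        exact genMat_arrow m R t hm (w n) (hw n)
      rw [h1, h2, list_map_smul_prod]
      simp [ht]

/-- the representation -/
noncomputable def rho (hm : 4 ≤ m) (ht : t ^ m = 0) :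
    Lam k m hm →ₐ[k] Matrix (Fin m) (Fin m) R :=
  RingQuot.liftAlgHom k ⟨rho0 k m R t hm, rho0_rel k m R t hm ht⟩

lemma rho_gen (hm : 4 ≤ m) (ht : t ^ m = 0) (g : LamGen m) :
    rho k m R t hm ht (π k m hm (FreeAlgebra.ι k g)) = genMat m R t hm g := by
  rw [rho, π, RingQuot.liftAlgHom_mkAlgHom_apply, rho0, FreeAlgebra.lift_ι_apply]


/-! ### Extraction lemmas -/

lemma rho_eL (hm : 4 ≤ m) (ht : t ^ m = 0) (i : Fin m) :
    rho k m R t hm ht (eL k m hm i) = single i i 1 :=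
  rho_gen k m R t hm ht (e i)

lemma rho_αL (hm : 4 ≤ m) (ht : t ^ m = 0) (i : Fin 2) :
    rho k m R t hm ht (αL k m hm i)
      = t • single ⟨2, by omega⟩ ⟨i.val, by omega⟩ 1 :=
  rho_gen k m R t hm ht (α i)

lemma rho_δL (hm : 4 ≤ m) (ht : t ^ m = 0) (i : Fin 2) :
    rho k m R t hm ht (δL k m hm i)
      = t • single ⟨i.val, by omega⟩ ⟨m - 1, by omega⟩ 1 :=
  rho_gen k m R t hm ht (δ i)

lemma rho_βL (hm : 4 ≤ m) (ht : t ^ m = 0) (j : Fin m) (h3 : 3 ≤ j.val) :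
    rho k m R t hm ht (βL k m hm j)
      = t • single j ⟨j.val - 1, by omega⟩ 1 := by
  have h := rho_gen k m R t hm ht (β j)
  rw [genMat_β, if_pos h3] at h
  exact h

lemma diag_step (U : Matrix (Fin m) (Fin m) R) (x : k) (v w : Fin m)
    (h : U * (x • (t • single v w 1)) = (t • single v w 1) * U) :
    t * ((algebraMap k R x) * U v v - U w w) = 0 := by
  have h1 := congrFun (congrFun h v) w
  rw [Matrix.mul_smul, Matrix.mul_smul, Matrix.smul_mul] at h1
  rw [Matrix.smul_apply, Matrix.smul_apply, Matrix.smul_apply,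
    mul_single_apply_same, single_mul_apply_same] at h1
  rw [mul_one, one_mul, smul_eq_mul, smul_eq_mul, Algebra.smul_def] at h1
  rw [mul_sub, sub_eq_zero, ← h1]
  ring

lemma diag_of_comm (U : Matrix (Fin m) (Fin m) R)
    (h : ∀ i : Fin m, U * single i i 1 = single i i 1 * U) :
    ∀ p q : Fin m, p ≠ q → U p q = 0 := by
  intro p q hpq
  have h1 := congrFun (congrFun (h q) p) q
  rw [mul_single_apply_same, mul_one,
    single_mul_apply_of_ne (h := hpq)] at h1
  exact h1

lemma diag_unit (U V : Matrix (Fin m) (Fin m) R) (hUV : U * V = 1)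
    (hU : ∀ p q : Fin m, p ≠ q → U p q = 0) (v : Fin m) : U v v * V v v = 1 := by
  have h1 := congrFun (congrFun hUV v) v
  rw [Matrix.mul_apply, Finset.sum_eq_single v] at h1
  · rw [h1, Matrix.one_apply_eq]
  · intro j _ hj
    rw [hU v j (Ne.symm hj), zero_mul]
  · exact fun h => absurd (Finset.mem_univ v) h

lemma prod_bridge (hm : 4 ≤ m) (f : Fin m → k) :
    ∏ j ∈ Finset.univ.filter (fun j : Fin m => 3 ≤ j.val), f j
      = ∏ i ∈ Finset.Icc 3 (m - 1), (if h : i < m then f ⟨i, h⟩ else 1) := by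
  rw [Finset.prod_filter]
  have hset : Finset.Icc 3 (m - 1) = (Finset.range m).filter (fun i => 3 ≤ i) := by
    ext i
    simp only [Finset.mem_Icc, Finset.mem_filter, Finset.mem_range]
    omega
  calc ∏ j : Fin m, (if 3 ≤ j.val then f j else 1)
      = ∏ j : Fin m,
          (fun i => if h : i < m then (if 3 ≤ i then f ⟨i, h⟩ else 1) else 1) j.val := by
        refine Finset.prod_congr rfl fun j _ => ?_
        simp [j.isLt]
    _ = ∏ i ∈ Finset.range m, (if h : i < m then (if 3 ≤ i then f ⟨i, h⟩ else 1) else 1) :=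
        by exact Fin.prod_univ_eq_prod_range (fun i => if h : i < m then (if 3 ≤ i then f ⟨i, h⟩ else 1) else 1) m
    _ = ∏ i ∈ Finset.Icc 3 (m - 1), (if h : i < m then f ⟨i, h⟩ else 1) := by
        rw [hset, Finset.prod_filter]
        refine Finset.prod_congr rfl fun i hi => ?_
        rw [Finset.mem_range] at hi
        rw [dif_pos hi]
        by_cases h3 : 3 ≤ i
        · rw [if_pos h3, if_pos h3, dif_pos hi]
        · rw [if_neg h3, if_neg h3]

/-! ### Relations inside `Λ_m` -/

section LamRel

variable (hm : 4 ≤ m)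

lemma eL_mul_eL (i j : Fin m) :
    eL k m hm i * eL k m hm j = if i = j then eL k m hm i else 0 := by
  have h := RingQuot.mkAlgHom_rel k (Rel.idem (k := k) (m := m) (hm := hm) i j)
  rw [_root_.map_mul] at h
  rcases eq_or_ne i j with rfl | hne
  · rw [if_pos rfl]
    rw [if_pos rfl] at h
    exact h
  · rw [if_neg hne]
    rw [if_neg hne, map_zero] at h
    exact h

lemma sum_eL : ∑ i : Fin m, eL k m hm i = 1 := by
  have h := RingQuot.mkAlgHom_rel k (Rel.sum_one (k := k) (m := m) (hm := hm))
  rw [map_sum, _root_.map_one] at h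
  exact h

lemma eL_αL (i : Fin 2) :
    eL k m hm ⟨2, by omega⟩ * αL k m hm i = αL k m hm i := by
  have h := RingQuot.mkAlgHom_rel k (Rel.alpha_src (k := k) (m := m) (hm := hm) i)
  rw [_root_.map_mul] at h
  exact h

lemma αL_eL (i : Fin 2) :
    αL k m hm i * eL k m hm ⟨i.val, by omega⟩ = αL k m hm i := by
  have h := RingQuot.mkAlgHom_rel k (Rel.alpha_tgt (k := k) (m := m) (hm := hm) i)
  rw [_root_.map_mul] at h
  exact h

lemma eL_δL (i : Fin 2) :
    eL k m hm ⟨i.val, by omega⟩ * δL k m hm i = δL k m hm i := by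
  have h := RingQuot.mkAlgHom_rel k (Rel.delta_src (k := k) (m := m) (hm := hm) i)
  rw [_root_.map_mul] at h
  exact h

lemma δL_eL (i : Fin 2) :
    δL k m hm i * eL k m hm ⟨m - 1, by omega⟩ = δL k m hm i := by
  have h := RingQuot.mkAlgHom_rel k (Rel.delta_tgt (k := k) (m := m) (hm := hm) i)
  rw [_root_.map_mul] at h
  exact h

lemma βL_junk (j : Fin m) (h3 : j.val < 3) : βL k m hm j = 0 := by
  have h := RingQuot.mkAlgHom_rel k (Rel.beta_junk (k := k) (m := m) (hm := hm) j h3)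
  rw [map_zero] at h
  exact h

lemma eL_βL (j : Fin m) (h3 : 3 ≤ j.val) :
    eL k m hm j * βL k m hm j = βL k m hm j := by
  have h := RingQuot.mkAlgHom_rel k (Rel.beta_src (k := k) (m := m) (hm := hm) j h3)
  rw [_root_.map_mul] at h
  exact h

lemma βL_eL (j : Fin m) (h3 : 3 ≤ j.val) :
    βL k m hm j * eL k m hm ⟨j.val - 1, by omega⟩ = βL k m hm j := by
  have h := RingQuot.mkAlgHom_rel k (Rel.beta_tgt (k := k) (m := m) (hm := hm) j h3)
  rw [_root_.map_mul] at h
  exact h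

/-- conjugation computation for diagonal-type units -/
lemma sum_eL_mul (p q : Fin m → k) (hpq : ∀ j, p j * q j = 1) :
    (∑ j, p j • eL k m hm j) * (∑ j, q j • eL k m hm j) = 1 := by
  rw [Finset.sum_mul_sum]
  have : ∀ i ∈ Finset.univ, ∀ j ∈ Finset.univ,
      (p i • eL k m hm i) * (q j • eL k m hm j)
        = if i = j then (p i * q i) • eL k m hm i else 0 := by
    intro i _ j _
    rw [smul_mul_assoc, mul_smul_comm, eL_mul_eL]
    rcases eq_or_ne i j with rfl | h
    · rw [if_pos rfl, if_pos rfl, smul_smul]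
    · rw [if_neg h, if_neg h, smul_zero, smul_zero]
  calc ∑ i, ∑ j, (p i • eL k m hm i) * (q j • eL k m hm j)
      = ∑ i, ∑ j, if i = j then (p i * q i) • eL k m hm i else (0 : Lam k m hm) := by
        refine Finset.sum_congr rfl fun i _ => Finset.sum_congr rfl fun j _ => ?_
        exact this i (Finset.mem_univ i) j (Finset.mem_univ j)
    _ = ∑ i, (p i * q i) • eL k m hm i := by
        refine Finset.sum_congr rfl fun i _ => ?_
        rw [Finset.sum_ite_eq (Finset.univ) i (fun j => (p i * q i) • eL k m hm i)]
        rw [if_pos (Finset.mem_univ i)]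
    _ = ∑ i, eL k m hm i := by
        refine Finset.sum_congr rfl fun i _ => ?_
        rw [hpq i, one_smul]
    _ = 1 := sum_eL k m hm

lemma conj_eq (lam : Fin m → kˣ) (x : Lam k m hm) (s tt : Fin m)
    (hs : eL k m hm s * x = x) (ht : x * eL k m hm tt = x) :
    (∑ j, (((lam j)⁻¹ : kˣ) : k) • eL k m hm j) * x * (∑ j, ((lam j : kˣ) : k) • eL k m hm j)
      = ((((lam s)⁻¹ * lam tt : kˣ)) : k) • x := by
  have hleft : (∑ j, (((lam j)⁻¹ : kˣ) : k) • eL k m hm j) * x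
      = (((lam s)⁻¹ : kˣ) : k) • x := by
    rw [Finset.sum_mul]
    rw [Finset.sum_eq_single s]
    · rw [smul_mul_assoc, hs]
    · intro j _ hj
      rw [smul_mul_assoc, ← hs, ← mul_assoc, eL_mul_eL, if_neg hj, zero_mul, smul_zero]
    · intro h
      exact absurd (Finset.mem_univ s) h
  have hright : x * (∑ j, ((lam j : kˣ) : k) • eL k m hm j)
      = ((lam tt : kˣ) : k) • x := by
    rw [Finset.mul_sum]
    rw [Finset.sum_eq_single tt]
    · rw [mul_smul_comm, ht]
    · intro j _ hj
      rw [mul_smul_comm, ← ht, mul_assoc, eL_mul_eL, if_neg (Ne.symm hj), mul_zero, smul_zero]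
    · intro h
      exact absurd (Finset.mem_univ tt) h
  rw [mul_assoc, hright, mul_smul_comm, hleft, smul_smul, Units.val_mul, mul_comm]

/-- conjugation by a unit, as an algebra homomorphism -/
noncomputable def conjHom (w winv : Lam k m hm) (h1 : w * winv = 1) (h2 : winv * w = 1) :
    Lam k m hm →ₐ[k] Lam k m hm where
  toFun x := winv * x * w
  map_one' := by
    show winv * 1 * w = 1
    rw [mul_one, h2]
  map_mul' x y := by
    show winv * (x * y) * w = (winv * x * w) * (winv * y * w)
    have h3 : (winv * x * w) * (winv * y * w) = winv * (x * ((w * winv) * y)) * w := by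
      noncomm_ring
    rw [h3, h1, one_mul]
  map_zero' := by
    show winv * 0 * w = 0
    rw [mul_zero, zero_mul]
  map_add' x y := by
    show winv * (x + y) * w = winv * x * w + winv * y * w
    rw [mul_add, add_mul]
  commutes' r := by
    show winv * algebraMap k (Lam k m hm) r * w = algebraMap k (Lam k m hm) r
    rw [← Algebra.commutes r winv, mul_assoc, h2, mul_one]

end LamRel

end Stmt5Aux

set_option maxHeartbeats 2000000
set_option synthInstance.maxHeartbeats 400000

/-- An automorphism `f` of `Λ_m` that fixes every primitive
idempotent `e_i` and sends `β_i ↦ b_iβ_i` (`4 ≤ i ≤ m`), `α_i ↦ a_iα_i`,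
`δ_i ↦ c_iδ_i` (`i = 1,2`), with `a₁c₁ = a₂c₂`, is inner if and only if
`a₁c₁b_mb_{m-1}⋯b₄ = 1`. -/
theorem stmt_5 (k : Type*) [Field k] [IsAlgClosed k] (m : ℕ) (hm : 4 ≤ m)
    (f : Lam k m hm ≃ₐ[k] Lam k m hm)
    (a c : Fin 2 → kˣ) (b : Fin m → kˣ)
    (hfe : ∀ i : Fin m, f (eL k m hm i) = eL k m hm i)
    (hfα : ∀ i : Fin 2, f (αL k m hm i) = (a i : k) • αL k m hm i)
    (hfδ : ∀ i : Fin 2, f (δL k m hm i) = (c i : k) • δL k m hm i)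
    (hfβ : ∀ j : Fin m, 3 ≤ j.val → f (βL k m hm j) = (b j : k) • βL k m hm j)
    (hac : (a 0 : k) * (c 0 : k) = (a 1 : k) * (c 1 : k)) :
    (∃ u : (Lam k m hm)ˣ, ∀ x, f x = ↑u⁻¹ * x * ↑u) ↔
      (a 0 : k) * (c 0 : k) *
        ∏ j ∈ Finset.univ.filter (fun j : Fin m => 3 ≤ j.val), (b j : k) = 1 := by
  classical
  have hm2 : (2 : ℕ) ≤ m := by omega
  have hbridge := Stmt5Aux.prod_bridge k m hm (fun j => (b j : k))
  constructor
  · -- forward direction: inner implies the scalar condition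
    rintro ⟨u, hu⟩
    set t : Stmt5Aux.TruncPoly k m := Stmt5Aux.tp k m with htdef
    have ht : t ^ m = 0 := Stmt5Aux.tp_pow_m k m
    set ρ := Stmt5Aux.rho k m (Stmt5Aux.TruncPoly k m) t hm ht with hρdef
    set U := ρ ↑u with hUdef
    set V := ρ ↑u⁻¹ with hVdef
    have key : ∀ x : Lam k m hm, (↑u : Lam k m hm) * f x = x * ↑u := fun x => by
      rw [hu x, ← mul_assoc, ← mul_assoc, Units.mul_inv, one_mul]
    set μ : Fin m → k := fun i => Stmt5Aux.tpEval k m hm2 (U i i) with hμdef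
    have hstep : ∀ (x : k) (v w : Fin m),
        U * (x • (t • Matrix.single v w (1 : Stmt5Aux.TruncPoly k m)))
          = (t • Matrix.single v w (1 : Stmt5Aux.TruncPoly k m)) * U →
        x * μ v = μ w := by
      intro x v w h
      have h0 := Stmt5Aux.diag_step k m (Stmt5Aux.TruncPoly k m) t U x v w h
      have h1 := Stmt5Aux.tpEval_eq_zero_of_tp_mul k m hm2 _ h0
      rw [map_sub, _root_.map_mul, AlgHom.commutes] at h1
      have h2 := sub_eq_zero.mp h1
      simpa using h2
    have hA : (a 0 : k) * μ ⟨2, by omega⟩ = μ ⟨(0 : Fin 2).val, by omega⟩ := by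
      apply hstep
      have h1 := key (αL k m hm 0)
      rw [hfα 0] at h1
      have h2 := congrArg ρ h1
      rw [_root_.map_mul, _root_.map_mul, map_smul,
        Stmt5Aux.rho_αL k m (Stmt5Aux.TruncPoly k m) t hm ht] at h2
      exact h2
    have hC : (c 0 : k) * μ ⟨(0 : Fin 2).val, by omega⟩ = μ ⟨m - 1, by omega⟩ := by
      apply hstep
      have h1 := key (δL k m hm 0)
      rw [hfδ 0] at h1
      have h2 := congrArg ρ h1
      rw [_root_.map_mul, _root_.map_mul, map_smul,
        Stmt5Aux.rho_δL k m (Stmt5Aux.TruncPoly k m) t hm ht] at h2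
      exact h2
    have hB0 : ∀ j : Fin m, 3 ≤ j.val → (b j : k) * μ j = μ ⟨j.val - 1, by omega⟩ := by
      intro j h3
      apply hstep
      have h1 := key (βL k m hm j)
      rw [hfβ j h3] at h1
      have h2 := congrArg ρ h1
      rw [_root_.map_mul, _root_.map_mul, map_smul,
        Stmt5Aux.rho_βL k m (Stmt5Aux.TruncPoly k m) t hm ht j h3] at h2
      exact h2
    set bk : ℕ → k := fun i => if h : i < m then (b ⟨i, h⟩ : k) else 1 with hbkdef
    set μ' : ℕ → k := fun n => if h : n < m then μ ⟨n, h⟩ else 0 with hμ'def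
    have hB : ∀ n, 3 ≤ n → n < m → bk n * μ' n = μ' (n - 1) := by
      intro n h3 hn
      have hb := hB0 ⟨n, hn⟩ h3
      have e1 : bk n = (b ⟨n, hn⟩ : k) := by rw [hbkdef]; exact dif_pos hn
      have e2 : μ' n = μ ⟨n, hn⟩ := by rw [hμ'def]; exact dif_pos hn
      have e3 : μ' (n - 1) = μ ⟨n - 1, by omega⟩ := by
        rw [hμ'def]; exact dif_pos (by omega)
      rw [e1, e2, e3]
      exact hb
    have claim : ∀ n, 3 ≤ n → n ≤ m - 1 →
        (∏ i ∈ Finset.Icc 3 n, bk i) * μ' n = μ' 2 := by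
      intro n hn3
      induction n, hn3 using Nat.le_induction with
      | base =>
          intro _
          rw [Finset.Icc_self, Finset.prod_singleton]
          exact hB 3 le_rfl (by omega)
      | succ n hn3' ih =>
          intro hn
          rw [Finset.prod_Icc_succ_top (by omega : 3 ≤ n + 1), mul_assoc,
            hB (n + 1) (by omega) (by omega)]
          have hn1 : n + 1 - 1 = n := by omega
          rw [hn1]
          exact ih (by omega)
    have hfin := claim (m - 1) (by omega) le_rfl
    have e4 : μ' (m - 1) = μ ⟨m - 1, by omega⟩ := by
      rw [hμ'def]; exact dif_pos (by omega)
    have e5 : μ' 2 = μ ⟨2, by omega⟩ := by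
      rw [hμ'def]; exact dif_pos (by omega)
    rw [e4, e5, ← hC, ← hA] at hfin
    -- μ ⟨2⟩ is nonzero
    have hUV : U * V = 1 := by
      rw [hUdef, hVdef, ← _root_.map_mul, Units.mul_inv, _root_.map_one]
    have hcomm : ∀ i : Fin m,
        U * Matrix.single i i (1 : Stmt5Aux.TruncPoly k m)
          = Matrix.single i i (1 : Stmt5Aux.TruncPoly k m) * U := by
      intro i
      have h1 := key (eL k m hm i)
      rw [hfe i] at h1
      have h2 := congrArg ρ h1
      rw [_root_.map_mul, _root_.map_mul,
        Stmt5Aux.rho_eL k m (Stmt5Aux.TruncPoly k m) t hm ht] at h2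
      exact h2
    have hdiag := Stmt5Aux.diag_of_comm m (Stmt5Aux.TruncPoly k m) U hcomm
    have hunit := Stmt5Aux.diag_unit m (Stmt5Aux.TruncPoly k m) U V hUV hdiag ⟨2, by omega⟩
    have hne : μ ⟨2, by omega⟩ ≠ 0 := by
      intro h0
      have h1 := congrArg (Stmt5Aux.tpEval k m hm2) hunit
      rw [_root_.map_mul, _root_.map_one] at h1
      have h2 : μ ⟨2, by omega⟩ * Stmt5Aux.tpEval k m hm2 (V ⟨2, by omega⟩ ⟨2, by omega⟩)
          = 1 := h1
      rw [h0, zero_mul] at h2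
      exact zero_ne_one h2
    -- conclude
    rw [hbridge]
    have hPP : (∏ i ∈ Finset.Icc 3 (m - 1), (if h : i < m then ((b ⟨i, h⟩ : kˣ) : k) else 1))
        = ∏ i ∈ Finset.Icc 3 (m - 1), bk i := by
      refine Finset.prod_congr rfl fun i _ => ?_
      rw [hbkdef]
    rw [hPP]
    have h9 : ((a 0 : k) * (c 0 : k) * (∏ i ∈ Finset.Icc 3 (m - 1), bk i) - 1)
        * μ ⟨2, by omega⟩ = 0 := by
      linear_combination hfin
    rcases mul_eq_zero.mp h9 with h | h
    · exact sub_eq_zero.mp h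
    · exact absurd h hne
  · -- backward direction: construct the inner unit
    intro hprod
    set bu : ℕ → kˣ := fun n => if h : n < m then b ⟨n, h⟩ else 1 with hbudef
    have hbu_coe : ∀ i, ((bu i : kˣ) : k)
        = (if h : i < m then ((b ⟨i, h⟩ : kˣ) : k) else 1) := by
      intro i
      simp only [hbudef]
      by_cases h : i < m
      · rw [dif_pos h, dif_pos h]
      · rw [dif_neg h, dif_neg h, Units.val_one]
    have hPk : (∏ j ∈ Finset.univ.filter (fun j : Fin m => 3 ≤ j.val), (b j : k))
        = ((∏ i ∈ Finset.Icc 3 (m - 1), bu i : kˣ) : k) := by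
      have hcoe : ((∏ i ∈ Finset.Icc 3 (m - 1), bu i : kˣ) : k)
          = ∏ i ∈ Finset.Icc 3 (m - 1), ((bu i : kˣ) : k) :=
        map_prod (Units.coeHom k) bu _
      rw [hbridge, hcoe]
      exact Finset.prod_congr rfl fun i _ => (hbu_coe i).symm
    have hPu : a 0 * c 0 * (∏ i ∈ Finset.Icc 3 (m - 1), bu i) = 1 := by
      apply Units.ext
      rw [Units.val_mul, Units.val_mul, ← hPk, Units.val_one]
      exact hprod
    have hmul : (∏ i ∈ Finset.Icc 3 (m - 1), bu i)⁻¹ = a 0 * c 0 :=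
      inv_eq_of_mul_eq_one_left hPu
    have hacU : a 0 * c 0 = a 1 * c 1 := by
      apply Units.ext
      rw [Units.val_mul, Units.val_mul]
      exact hac
    set lamu : ℕ → kˣ := fun n => if n = 0 then a 0 else if n = 1 then a 1
      else (∏ i ∈ Finset.Icc 3 n, bu i)⁻¹ with hlamudef
    have hQ : ∀ n, 2 ≤ n → lamu n = (∏ i ∈ Finset.Icc 3 n, bu i)⁻¹ := by
      intro n h2n
      simp only [hlamudef]
      rw [if_neg (by omega : ¬ n = 0), if_neg (by omega : ¬ n = 1)]
    have hQ2 : lamu 2 = 1 := by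
      rw [hQ 2 le_rfl, Finset.Icc_eq_empty (by omega : ¬ (3:ℕ) ≤ 2),
        Finset.prod_empty, inv_one]
    have hQm1 : lamu (m - 1) = a 0 * c 0 := by
      rw [hQ (m - 1) (by omega)]
      exact hmul
    have hl0 : lamu 0 = a 0 := by simp [hlamudef]
    have hl1 : lamu 1 = a 1 := by simp [hlamudef]
    have hbu_b : ∀ j : Fin m, bu j.val = b j := by
      intro j
      simp only [hbudef]
      rw [dif_pos j.isLt]
    have hβsc : ∀ n, 3 ≤ n → n < m → (lamu n)⁻¹ * lamu (n - 1) = bu n := by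
      intro n h3 hn
      rcases eq_or_lt_of_le h3 with h4 | h4
      · subst h4
        rw [hQ 3 (by omega), Finset.Icc_self, Finset.prod_singleton, inv_inv]
        have : (3 : ℕ) - 1 = 2 := rfl
        rw [this, hQ2, mul_one]
      · have h5 : 2 ≤ n - 1 := by omega
        rw [hQ n (by omega), hQ (n - 1) h5, inv_inv]
        have h6 : n - 1 + 1 = n := by omega
        have h7 := Finset.prod_Icc_succ_top (by omega : 3 ≤ n - 1 + 1) bu
        rw [h6] at h7
        rw [h7, mul_comm (∏ i ∈ Finset.Icc 3 (n-1), bu i) (bu n), mul_inv_cancel_right]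
    -- the unit
    set w : Lam k m hm := ∑ j : Fin m, ((lamu j.val : kˣ) : k) • eL k m hm j with hwdef
    set winv : Lam k m hm :=
      ∑ j : Fin m, (((lamu j.val)⁻¹ : kˣ) : k) • eL k m hm j with hwinvdef
    have h1 : w * winv = 1 := by
      rw [hwdef, hwinvdef]
      exact Stmt5Aux.sum_eL_mul k m hm _ _ (fun j => by simp)
    have h2 : winv * w = 1 := by
      rw [hwdef, hwinvdef]
      exact Stmt5Aux.sum_eL_mul k m hm _ _ (fun j => by simp)
    refine ⟨⟨w, winv, h1, h2⟩, ?_⟩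
    have hconj : ∀ (x : Lam k m hm) (s tt : Fin m), eL k m hm s * x = x → x * eL k m hm tt = x →
        winv * x * w = (((lamu s.val)⁻¹ * lamu tt.val : kˣ) : k) • x := by
      intro x s tt hs ht
      have hc := Stmt5Aux.conj_eq k m hm (fun j : Fin m => lamu j.val) x s tt hs ht
      rw [hwdef, hwinvdef]
      exact hc
    have hhom : f.toAlgHom = Stmt5Aux.conjHom k m hm w winv h1 h2 := by
      refine RingQuot.ringQuot_ext' k _ _ ?_
      refine FreeAlgebra.hom_ext ?_
      funext g
      cases g with
      | e i =>
          show f (eL k m hm i) = winv * eL k m hm i * w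
          rw [hfe i, hconj (eL k m hm i) i i
            (by rw [Stmt5Aux.eL_mul_eL, if_pos rfl]) (by rw [Stmt5Aux.eL_mul_eL, if_pos rfl])]
          simp
      | α i =>
          show f (αL k m hm i) = winv * αL k m hm i * w
          rw [hfα i, hconj (αL k m hm i) ⟨2, by omega⟩ ⟨i.val, by omega⟩
            (Stmt5Aux.eL_αL k m hm i) (Stmt5Aux.αL_eL k m hm i)]
          have hsc : ((lamu (Fin.val (⟨2, by omega⟩ : Fin m)))⁻¹
              * lamu (Fin.val (⟨i.val, by omega⟩ : Fin m)) : kˣ) = a i := by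
            show (lamu 2)⁻¹ * lamu i.val = a i
            fin_cases i
            · show (lamu 2)⁻¹ * lamu 0 = a 0
              rw [hQ2, hl0, inv_one, one_mul]
            · show (lamu 2)⁻¹ * lamu 1 = a 1
              rw [hQ2, hl1, inv_one, one_mul]
          exact (congrArg (fun z : kˣ => (z : k) • αL k m hm i) hsc).symm
      | δ i =>
          show f (δL k m hm i) = winv * δL k m hm i * w
          rw [hfδ i, hconj (δL k m hm i) ⟨i.val, by omega⟩ ⟨m - 1, by omega⟩
            (Stmt5Aux.eL_δL k m hm i) (Stmt5Aux.δL_eL k m hm i)]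
          have hsc : ((lamu (Fin.val (⟨i.val, by omega⟩ : Fin m)))⁻¹
              * lamu (Fin.val (⟨m - 1, by omega⟩ : Fin m)) : kˣ) = c i := by
            show (lamu i.val)⁻¹ * lamu (m - 1) = c i
            rw [hQm1]
            fin_cases i
            · show (lamu 0)⁻¹ * (a 0 * c 0) = c 0
              rw [hl0, inv_mul_cancel_left]
            · show (lamu 1)⁻¹ * (a 0 * c 0) = c 1
              rw [hl1, hacU, inv_mul_cancel_left]
          exact (congrArg (fun z : kˣ => (z : k) • δL k m hm i) hsc).symm
      | β j =>
          by_cases h3 : 3 ≤ j.val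
          · show f (βL k m hm j) = winv * βL k m hm j * w
            rw [hfβ j h3, hconj (βL k m hm j) j ⟨j.val - 1, by omega⟩
              (Stmt5Aux.eL_βL k m hm j h3) (Stmt5Aux.βL_eL k m hm j h3)]
            have hsc : ((lamu j.val)⁻¹
                * lamu (Fin.val (⟨j.val - 1, by omega⟩ : Fin m)) : kˣ) = b j := by
              show (lamu j.val)⁻¹ * lamu (j.val - 1) = b j
              rw [hβsc j.val h3 j.isLt]
              exact hbu_b j
            exact (congrArg (fun z : kˣ => (z : k) • βL k m hm j) hsc).symm
          · show f (βL k m hm j) = winv * βL k m hm j * w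
            rw [Stmt5Aux.βL_junk k m hm j (by omega), map_zero, mul_zero, zero_mul]
    intro x
    exact AlgHom.congr_fun hhom x
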